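/- A function f : ℝ → ℝ satisfies f(x - f(x) + f(y)) = f(y) for all x, y ∈ ℝ with range of x ↦ x - f(x) equal to [0,1) if and only if there exists a constant c ∈ ℝ such that f(x) = ⌊x - c⌋ + c for all x ∈ ℝ. -/

import Mathlib

theorem decomposer_Ico_iff_shifted_floor (f : ℝ → ℝ) :
    ((∀ x y : ℝ, f (x - f x + f y) = f y) ∧
      Set.range (fun x : ℝ => x - f x) = Set.Ico (0:ℝ) 1) ↔
    ∃ c : ℝ, ∀ x : ℝ, f x = (⌊x - c⌋ : ℝ) + c := by
  constructor
  · rintro ⟨heq, hrange⟩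
    have hC : ∀ x : ℝ, x - f x ∈ Set.Ico (0:ℝ) 1 := by
      intro x
      rw [← hrange]; exact ⟨x, rfl⟩
    have hA : ∀ t : ℝ, t ∈ Set.Ico (0:ℝ) 1 → ∀ y : ℝ, f (t + f y) = f y := by
      intro t ht y
      rw [← hrange] at ht
      obtain ⟨x, hx⟩ := ht
      simp only at hx
      rw [← hx]; exact heq x y
    have hfix : ∀ y : ℝ, f (f y) = f y := by
      intro y
      have := hA 0 ⟨le_refl 0, by norm_num⟩ y
      simpa using this
    have hconst : ∀ y p : ℝ, f y ≤ p → p < f y + 1 → f p = f y := by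
      intro y p h1 h2
      have : f (p - f y + f y) = f y := hA (p - f y) ⟨by linarith, by linarith⟩ y
      simpa using this
    have hup : ∀ s : ℝ, f s = s → f (s + 1) = s + 1 := by
      intro s hs
      have h1 := hC (s + 1)
      set s' := f (s + 1) with hs'
      have hfs' : f s' = s' := hfix (s + 1)
      obtain ⟨ha, hb⟩ := h1
      by_contra hne
      have hlt : s' < s + 1 := lt_of_le_of_ne (by linarith) hne
      have hgt : s < s' := by linarith
      have : f s' = f s := hconst s s' (by rw [hs]; linarith) (by rw [hs]; linarith)
      rw [hfs', hs] at this; linarith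
    have hdown : ∀ s : ℝ, f s = s → f (s - 1) = s - 1 := by
      intro s hs
      have h1 := hC (s - 1)
      set s' := f (s - 1) with hs'
      have hfs' : f s' = s' := hfix (s - 1)
      obtain ⟨ha, hb⟩ := h1
      by_contra hne
      have hlt : s' < s - 1 := lt_of_le_of_ne (by linarith) hne
      have h2 : f (s' + 1) = s' + 1 := hup s' hfs'
      have : f s = f (s' + 1) := hconst (s' + 1) s (by rw [h2]; linarith) (by rw [h2]; linarith)
      rw [hs, h2] at this; linarith
    set c := f 0 with hc
    have hcfix : f c = c := hfix 0
    have hn : ∀ n : ℤ, f (c + n) = c + n := by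
      intro n
      induction n using Int.induction_on with
      | zero => simpa using hcfix
      | succ k ih =>
        have := hup (c + k) ih
        have e : c + ((k : ℤ) + 1 : ℤ) = c + (k : ℝ) + 1 := by push_cast; ring
        rw [e]; exact this
      | pred k ih =>
        have := hdown (c + (-(k : ℤ) : ℤ)) (by exact_mod_cast ih)
        have e : c + ((-(k : ℤ) - 1 : ℤ) : ℝ) = c + ((-(k : ℤ) : ℤ) : ℝ) - 1 := by
          push_cast; ring
        rw [e]
        convert this using 2
    refine ⟨c, fun x => ?_⟩
    set n := ⌊x - c⌋ with hnn
    have h1 : (n : ℝ) ≤ x - c := Int.floor_le _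
    have h2 : x - c < n + 1 := Int.lt_floor_add_one _
    have := hconst (c + n) x (by rw [hn n]; linarith) (by rw [hn n]; linarith)
    rw [hn n] at this
    rw [this]; ring
  · rintro ⟨c, hc⟩
    constructor
    · intro x y
      rw [hc x, hc y, hc]
      have h1 : x - ((⌊x - c⌋ : ℝ) + c) + ((⌊y - c⌋ : ℝ) + c) - c
          = Int.fract (x - c) + (⌊y - c⌋ : ℤ) := by
        rw [Int.fract]; push_cast; ring
      rw [h1, Int.floor_add_intCast, Int.floor_fract]
      push_cast; ring
    · ext r
      simp only [Set.mem_range, Set.mem_Ico]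
      constructor
      · rintro ⟨x, hx⟩
        rw [hc x] at hx
        have : r = Int.fract (x - c) := by rw [← hx, Int.fract]; push_cast; ring
        rw [this]
        exact ⟨Int.fract_nonneg _, Int.fract_lt_one _⟩
      · rintro ⟨h0, h1⟩
        refine ⟨r + c, ?_⟩
        show r + c - f (r + c) = r
        rw [hc]
        have hz : ⌊r + c - c⌋ = 0 := by
          rw [show r + c - c = r by ring]
          exact Int.floor_eq_zero_iff.mpr ⟨h0, h1⟩
        rw [hz]
        push_cast
        ring
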